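/- The polynomial X⁴ - X³ + 2X² + X + 1 is irreducible over ℚ and has no real roots; moreover, if t is any root of this polynomial in a field extension of ℚ, then (2t³ - 2t² + 6t + 1)² = -15. In particular the quartic number field K = ℚ(t) is totally imaginary and contains a square root of -15, hence contains the imaginary quadratic field ℚ(√-15). -/
import Mathlib


open Polynomial

lemma zmod3_no_root : ∀ z : ZMod 3, z^4 - z^3 + 2*z^2 + z + 1 ≠ 0 := by decide

lemma int_no_root (r : ℤ) : r^4 - r^3 + 2*r^2 + r + 1 ≠ 0 := by
  intro h
  apply zmod3_no_root (r : ZMod 3)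
  have := congrArg (Int.cast : ℤ → ZMod 3) h
  push_cast at this
  exact this

lemma pZ_monic : (X ^ 4 - X ^ 3 + 2 * X ^ 2 + X + 1 : ℤ[X]).Monic := by
  have h : (X ^ 4 - X ^ 3 + 2 * X ^ 2 + X + 1 : ℤ[X]) = X ^ 4 + (-(X^3) + 2*X^2 + X + 1) := by
    ring
  rw [h]
  exact monic_X_pow_add (lt_of_le_of_lt (by compute_degree) (by decide : (3 : WithBot ℕ) < 4))

lemma pZ_natDegree : (X ^ 4 - X ^ 3 + 2 * X ^ 2 + X + 1 : ℤ[X]).natDegree = 4 := by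
  compute_degree!

lemma monic_expand2 (a : ℤ[X]) (ha : a.Monic) (hd : a.natDegree = 2) :
    a = X^2 + C (a.coeff 1) * X + C (a.coeff 0) := by
  have h2 : a.coeff 2 = 1 := by
    have := ha.coeff_natDegree; rwa [hd] at this
  conv_lhs => rw [a.as_sum_range' 3 (by omega)]
  rw [Finset.sum_range_succ, Finset.sum_range_succ, Finset.sum_range_one, h2]
  simp only [← C_mul_X_pow_eq_monomial, C_1]
  ring

lemma monic_expand1 (a : ℤ[X]) (ha : a.Monic) (hd : a.natDegree = 1) :
    a = X + C (a.coeff 0) := by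
  have h1 : a.coeff 1 = 1 := by
    have := ha.coeff_natDegree; rwa [hd] at this
  conv_lhs => rw [a.as_sum_range' 2 (by omega)]
  rw [Finset.sum_range_succ, Finset.sum_range_one, h1]
  simp only [← C_mul_X_pow_eq_monomial, C_1]
  ring

lemma case_deg1 (a b : ℤ[X]) (ha : a.Monic) (hd : a.natDegree = 1)
    (h : a * b = X ^ 4 - X ^ 3 + 2 * X ^ 2 + X + 1) : False := by
  have ea := monic_expand1 a ha hd
  set r : ℤ := -(a.coeff 0) with hr
  have h0 : eval r (a * b) = eval r (X ^ 4 - X ^ 3 + 2 * X ^ 2 + X + 1 : ℤ[X]) := by rw [h]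
  rw [ea] at h0
  simp [eval_mul, eval_add, eval_pow] at h0
  apply int_no_root r
  rw [← h0]; ring

lemma case_deg2 (a b : ℤ[X]) (ha : a.Monic) (hb : b.Monic) (hda : a.natDegree = 2)
    (hdb : b.natDegree = 2)
    (h : a * b = X ^ 4 - X ^ 3 + 2 * X ^ 2 + X + 1) : False := by
  have ea := monic_expand2 a ha hda
  have eb := monic_expand2 b hb hdb
  have h0 : eval 0 (a * b) = eval 0 (X ^ 4 - X ^ 3 + 2 * X ^ 2 + X + 1 : ℤ[X]) := by rw [h]
  have h1 : eval 1 (a * b) = eval 1 (X ^ 4 - X ^ 3 + 2 * X ^ 2 + X + 1 : ℤ[X]) := by rw [h]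
  have h2 : eval (-1) (a * b) = eval (-1) (X ^ 4 - X ^ 3 + 2 * X ^ 2 + X + 1 : ℤ[X]) := by rw [h]
  have h3 : eval 2 (a * b) = eval 2 (X ^ 4 - X ^ 3 + 2 * X ^ 2 + X + 1 : ℤ[X]) := by rw [h]
  rw [ea, eb] at h0 h1 h2 h3
  simp [eval_mul, eval_add, eval_pow] at h0 h1 h2 h3
  rcases Int.mul_eq_one_iff_eq_one_or_neg_one.mp h0 with ⟨e1, e2⟩ | ⟨e1, e2⟩ <;>
      rw [e1, e2] at h1 h2 h3
  · have k1 : 2*(a.coeff 1 + b.coeff 1) + a.coeff 1 * b.coeff 1 = 0 := by linear_combination h1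
    have k2 : -2*(a.coeff 1 + b.coeff 1) + a.coeff 1 * b.coeff 1 = 0 := by linear_combination h2
    have k3 : 10*(a.coeff 1 + b.coeff 1) + 4*(a.coeff 1 * b.coeff 1) = -6 := by
      linear_combination h3
    linarith [k1, k2, k3]
  · have k1 : a.coeff 1 * b.coeff 1 = 4 := by linear_combination h1
    have k3 : 9 + 6*(a.coeff 1 + b.coeff 1) + 4*(a.coeff 1 * b.coeff 1) = 19 := by
      linear_combination h3
    have hu : a.coeff 1 + b.coeff 1 = -1 := by linarith [k1, k3]
    have hsq : (a.coeff 1 + b.coeff 1)^2 = 1 := by rw [hu]; norm_num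
    nlinarith [sq_nonneg (a.coeff 1 - b.coeff 1), hsq, k1]

lemma pZ_irred : Irreducible (X ^ 4 - X ^ 3 + 2 * X ^ 2 + X + 1 : ℤ[X]) := by
  rw [irreducible_iff]
  constructor
  · intro hu
    have := natDegree_eq_zero_of_isUnit hu
    rw [pZ_natDegree] at this
    omega
  · intro a b hab
    by_contra hcon
    push_neg at hcon
    obtain ⟨hua, hub⟩ := hcon
    have ha0 : a ≠ 0 := by rintro rfl; simp at hab; exact pZ_monic.ne_zero hab
    have hb0 : b ≠ 0 := by rintro rfl; simp at hab; exact pZ_monic.ne_zero hab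
    have hlc : a.leadingCoeff * b.leadingCoeff = 1 := by
      rw [← leadingCoeff_mul, ← hab]; exact pZ_monic
    have main : ∀ a' b' : ℤ[X], a'.Monic → b'.Monic →
        a' * b' = X ^ 4 - X ^ 3 + 2 * X ^ 2 + X + 1 → ¬IsUnit a' → ¬IsUnit b' → False := by
      intro a' b' ha' hb' h' hua' hub'
      have hdeg' : a'.natDegree + b'.natDegree = 4 := by
        rw [← natDegree_mul ha'.ne_zero hb'.ne_zero, h', pZ_natDegree]
      have hna : a'.natDegree ≠ 0 := by
        intro h0
        exact hua' (ha'.natDegree_eq_zero.mp h0 ▸ isUnit_one)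
      have hnb : b'.natDegree ≠ 0 := by
        intro h0
        exact hub' (hb'.natDegree_eq_zero.mp h0 ▸ isUnit_one)
      have hcase : a'.natDegree = 1 ∨ a'.natDegree = 2 ∨ b'.natDegree = 1 := by omega
      rcases hcase with h1 | h1 | h1
      · exact case_deg1 a' b' ha' h1 h'
      · exact case_deg2 a' b' ha' hb' h1 (by omega) h'
      · exact case_deg1 b' a' hb' h1 (by rw [mul_comm]; exact h')
    rcases Int.mul_eq_one_iff_eq_one_or_neg_one.mp hlc with ⟨e1, e2⟩ | ⟨e1, e2⟩
    · exact main a b e1 e2 hab.symm hua hub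
    · exact main (-a) (-b) (by unfold Monic; rw [leadingCoeff_neg, e1, neg_neg])
        (by unfold Monic; rw [leadingCoeff_neg, e2, neg_neg])
        (by rw [neg_mul_neg]; exact hab.symm) (by simpa using hua) (by simpa using hub)

lemma pQ_irred : Irreducible (X ^ 4 - X ^ 3 + 2 * X ^ 2 + X + 1 : ℚ[X]) := by
  have h := (IsPrimitive.Int.irreducible_iff_irreducible_map_cast pZ_monic.isPrimitive).mp pZ_irred
  have e : (X ^ 4 - X ^ 3 + 2 * X ^ 2 + X + 1 : ℤ[X]).map (Int.castRingHom ℚ) =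
      (X ^ 4 - X ^ 3 + 2 * X ^ 2 + X + 1 : ℚ[X]) := by
    simp [Polynomial.map_add, Polynomial.map_sub, Polynomial.map_pow, Polynomial.map_mul,
      Polynomial.map_ofNat]
  rwa [e] at h
lemma no_real_root (x : ℝ) : x ^ 4 - x ^ 3 + 2 * x ^ 2 + x + 1 ≠ 0 := by
  intro h
  nlinarith [sq_nonneg (x^2 - x), sq_nonneg (x + 1), sq_nonneg x, sq_nonneg (x^2 - x/2 - 1),
    sq_nonneg (x - 1), sq_nonneg (x^2 + 1)]

lemma sq_identity {L : Type*} [CommRing L] (t : L)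
    (h : t ^ 4 - t ^ 3 + 2 * t ^ 2 + t + 1 = 0) :
    (2 * t ^ 3 - 2 * t ^ 2 + 6 * t + 1) ^ 2 = -15 := by
  linear_combination (4 * t ^ 2 - 4 * t + 16) * h

lemma root_eq :
    (AdjoinRoot.root (X ^ 4 - X ^ 3 + 2 * X ^ 2 + X + 1 : ℚ[X])) ^ 4
      - (AdjoinRoot.root (X ^ 4 - X ^ 3 + 2 * X ^ 2 + X + 1 : ℚ[X])) ^ 3
      + 2 * (AdjoinRoot.root (X ^ 4 - X ^ 3 + 2 * X ^ 2 + X + 1 : ℚ[X])) ^ 2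
      + AdjoinRoot.root (X ^ 4 - X ^ 3 + 2 * X ^ 2 + X + 1 : ℚ[X]) + 1 = 0 := by
  have h := AdjoinRoot.eval₂_root (X ^ 4 - X ^ 3 + 2 * X ^ 2 + X + 1 : ℚ[X])
  simpa using h


/-- The polynomial `X⁴ - X³ + 2X² + X + 1` is irreducible over `ℚ` and has no real
roots; moreover, for any root `t` of this polynomial in a field extension of `ℚ` one has
`(2t³ - 2t² + 6t + 1)² = -15`. In particular the quartic number field `K = ℚ(t)` is
totally imaginary (it admits no embedding into `ℝ`) and contains a square root of `-15`,
hence contains the imaginary quadratic field `ℚ(√-15)`. -/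
theorem quartic_field_contains_sqrt_neg_fifteen :
    Irreducible (X ^ 4 - X ^ 3 + 2 * X ^ 2 + X + 1 : ℚ[X]) ∧
    (∀ x : ℝ, x ^ 4 - x ^ 3 + 2 * x ^ 2 + x + 1 ≠ 0) ∧
    (∀ (L : Type) [Field L] [Algebra ℚ L] (t : L),
        t ^ 4 - t ^ 3 + 2 * t ^ 2 + t + 1 = 0 →
          (2 * t ^ 3 - 2 * t ^ 2 + 6 * t + 1) ^ 2 = -15) ∧
    IsEmpty (AdjoinRoot (X ^ 4 - X ^ 3 + 2 * X ^ 2 + X + 1 : ℚ[X]) →+* ℝ) ∧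
    (∃ s : AdjoinRoot (X ^ 4 - X ^ 3 + 2 * X ^ 2 + X + 1 : ℚ[X]), s ^ 2 = -15) := by
  refine ⟨pQ_irred, no_real_root, fun L _ _ t ht => sq_identity t ht, ?_, ?_⟩
  · constructor
    intro f
    have h := congrArg f root_eq
    simp only [map_add, map_sub, map_mul, map_pow, map_one, map_ofNat, map_zero] at h
    exact no_real_root _ h
  · exact ⟨2 * (AdjoinRoot.root _) ^ 3 - 2 * (AdjoinRoot.root _) ^ 2
      + 6 * (AdjoinRoot.root _) + 1, sq_identity _ root_eq⟩
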